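/- Let G be a compact Hausdorff group and let (μ_n) be a sequence of complex Borel measures on G with sup_n ‖μ_n‖ < ∞ (total variation norms), and let μ be a complex Borel measure on G. Then the following are equivalent: (a) μ_n → μ weak*, i.e. ∫_G f dμ_n → ∫_G f dμ for every continuous f : G → ℂ; (b) for every continuous f : G → ℂ, μ_n ∗ f → μ ∗ f uniformly on G. -/

import Mathlib

open MeasureTheory Filter Topology ZeroAtInfty

section ComplexMeasureTools

variable {α : Type*} [MeasurableSpace α]

/-- The positive part of the real part of a complex measure. -/
noncomputable def cRePos (c : ComplexMeasure α) : Measure α :=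
  (ComplexMeasure.re c).toJordanDecomposition.posPart

/-- The negative part of the real part of a complex measure. -/
noncomputable def cReNeg (c : ComplexMeasure α) : Measure α :=
  (ComplexMeasure.re c).toJordanDecomposition.negPart

/-- The positive part of the imaginary part of a complex measure. -/
noncomputable def cImPos (c : ComplexMeasure α) : Measure α :=
  (ComplexMeasure.im c).toJordanDecomposition.posPart

/-- The negative part of the imaginary part of a complex measure. -/
noncomputable def cImNeg (c : ComplexMeasure α) : Measure α :=
  (ComplexMeasure.im c).toJordanDecomposition.negPart

instance (c : ComplexMeasure α) : IsFiniteMeasure (cRePos c) := by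
  unfold cRePos; infer_instance
instance (c : ComplexMeasure α) : IsFiniteMeasure (cReNeg c) := by
  unfold cReNeg; infer_instance
instance (c : ComplexMeasure α) : IsFiniteMeasure (cImPos c) := by
  unfold cImPos; infer_instance
instance (c : ComplexMeasure α) : IsFiniteMeasure (cImNeg c) := by
  unfold cImNeg; infer_instance

/-- The integral `∫ f dc` of a (complex-valued) function against a complex measure `c`,
defined through the Jordan decompositions of the real and imaginary parts of `c`. -/
noncomputable def cInt (c : ComplexMeasure α) (f : α → ℂ) : ℂ :=
  ((∫ x, f x ∂(cRePos c)) - ∫ x, f x ∂(cReNeg c)) +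
    Complex.I * ((∫ x, f x ∂(cImPos c)) - ∫ x, f x ∂(cImNeg c))

/-- The total variation norm of a complex measure: the supremum of `∑ |c(Eᵢ)|` over all finite
families of pairwise disjoint measurable sets. -/
noncomputable def tvNorm (c : ComplexMeasure α) : ℝ :=
  sSup {r : ℝ | ∃ P : Finset (Set α), (∀ E ∈ P, MeasurableSet E) ∧
    (P : Set (Set α)).PairwiseDisjoint id ∧ r = ∑ E ∈ P, ‖c E‖}

end ComplexMeasureTools

section GroupTools

variable {G : Type*} [Group G] [TopologicalSpace G] [MeasurableSpace G]

/-- The convolution of two complex measures, defined componentwise through the Jordan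
decompositions by bilinearity from the convolution (pushforward of the product measure under
multiplication) of finite nonnegative measures. -/
noncomputable def cconv (c d : ComplexMeasure G) : ComplexMeasure G :=
  MeasureTheory.SignedMeasure.toComplexMeasure
    (((((cRePos c).mconv (cRePos d) + (cReNeg c).mconv (cReNeg d)) +
        ((cImPos c).mconv (cImNeg d) + (cImNeg c).mconv (cImPos d))).toSignedMeasure) -
      ((((cRePos c).mconv (cReNeg d) + (cReNeg c).mconv (cRePos d)) +
        ((cImPos c).mconv (cImPos d) + (cImNeg c).mconv (cImNeg d))).toSignedMeasure))
    (((((cRePos c).mconv (cImPos d) + (cReNeg c).mconv (cImNeg d)) +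
        ((cImPos c).mconv (cRePos d) + (cImNeg c).mconv (cReNeg d))).toSignedMeasure) -
      ((((cRePos c).mconv (cImNeg d) + (cReNeg c).mconv (cImPos d)) +
        ((cImPos c).mconv (cReNeg d) + (cImNeg c).mconv (cRePos d))).toSignedMeasure))

/-- The Dirac measure at the identity, as a complex measure. -/
noncomputable def cdirac : ComplexMeasure G :=
  MeasureTheory.SignedMeasure.toComplexMeasure
    (MeasureTheory.Measure.toSignedMeasure (MeasureTheory.Measure.dirac (1 : G))) 0

/-- Convolution powers of a complex measure, with `c^0 = δ_e`. -/
noncomputable def cpow (c : ComplexMeasure G) : ℕ → ComplexMeasure G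
  | 0 => cdirac
  | n + 1 => cconv (cpow c n) c

end GroupTools

/-- The convolution `ν ∗ f` of a complex measure and a function:
`(ν ∗ f)(x) = ∫ f(g⁻¹ x) dν(g)`. -/
noncomputable def cmeasConv {G : Type*} [Group G] [TopologicalSpace G] [MeasurableSpace G]
    (ν : ComplexMeasure G) (f : G → ℂ) : G → ℂ :=
  fun x => cInt ν (fun g => f (g⁻¹ * x))

section Aux
variable {α : Type*} [MeasurableSpace α]

/-- total mass of the four Jordan parts -/
noncomputable def cmass (c : ComplexMeasure α) : ℝ :=
  ((cRePos c Set.univ).toReal + (cReNeg c Set.univ).toReal) +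
    ((cImPos c Set.univ).toReal + (cImNeg c Set.univ).toReal)

lemma cmass_nonneg (c : ComplexMeasure α) : 0 ≤ cmass c := by
  unfold cmass; positivity

lemma signed_apply_eq (s : SignedMeasure α) {E : Set α} (hE : MeasurableSet E) :
    s E = (s.toJordanDecomposition.posPart E).toReal -
      (s.toJordanDecomposition.negPart E).toReal := by
  conv_lhs => rw [← s.toSignedMeasure_toJordanDecomposition]
  rw [JordanDecomposition.toSignedMeasure, Measure.toSignedMeasure_sub_apply hE]
  rfl

lemma abs_signed_le (s : SignedMeasure α) {E : Set α} (hE : MeasurableSet E) :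
    |s E| ≤ (s.toJordanDecomposition.posPart E).toReal +
      (s.toJordanDecomposition.negPart E).toReal := by
  rw [signed_apply_eq s hE]
  have h1 : (0:ℝ) ≤ (s.toJordanDecomposition.posPart E).toReal := ENNReal.toReal_nonneg
  have h2 : (0:ℝ) ≤ (s.toJordanDecomposition.negPart E).toReal := ENNReal.toReal_nonneg
  rw [abs_sub_le_iff]; constructor <;> linarith

lemma sum_measure_le (ν : Measure α) [IsFiniteMeasure ν] (P : Finset (Set α))
    (hm : ∀ E ∈ P, MeasurableSet E) (hd : (P : Set (Set α)).PairwiseDisjoint id) :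
    ∑ E ∈ P, (ν E).toReal ≤ (ν Set.univ).toReal := by
  rw [← ENNReal.toReal_sum (fun E _ => measure_ne_top ν E)]
  refine ENNReal.toReal_mono (measure_ne_top ν _) ?_
  have := measure_biUnion_finset (μ := ν) (f := id) hd hm
  simp only [id] at this
  rw [← this]
  exact measure_mono (Set.subset_univ _)

lemma tvNorm_set_bddAbove (c : ComplexMeasure α) :
    BddAbove {r : ℝ | ∃ P : Finset (Set α), (∀ E ∈ P, MeasurableSet E) ∧
      (P : Set (Set α)).PairwiseDisjoint id ∧ r = ∑ E ∈ P, ‖c E‖} := by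
  refine ⟨cmass c, ?_⟩
  rintro r ⟨P, hm, hd, rfl⟩
  have key : ∀ E ∈ P, ‖c E‖ ≤ ((cRePos c E).toReal + (cReNeg c E).toReal) +
      ((cImPos c E).toReal + (cImNeg c E).toReal) := by
    intro E hE
    have h1 := abs_signed_le (ComplexMeasure.re c) (hm E hE)
    have h2 := abs_signed_le (ComplexMeasure.im c) (hm E hE)
    have h3 : ‖c E‖ ≤ |(c E).re| + |(c E).im| := by
      exact Complex.norm_le_abs_re_add_abs_im _
    have h4 : (ComplexMeasure.re c) E = (c E).re := rfl
    have h5 : (ComplexMeasure.im c) E = (c E).im := rfl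
    rw [h4] at h1; rw [h5] at h2
    calc ‖c E‖ ≤ |(c E).re| + |(c E).im| := h3
      _ ≤ _ := by exact add_le_add h1 h2
  calc ∑ E ∈ P, ‖c E‖
      ≤ ∑ E ∈ P, (((cRePos c E).toReal + (cReNeg c E).toReal) +
        ((cImPos c E).toReal + (cImNeg c E).toReal)) := Finset.sum_le_sum key
    _ ≤ cmass c := by
        rw [show cmass c = _ from rfl]
        simp only [Finset.sum_add_distrib]
        unfold cmass
        gcongr <;> exact sum_measure_le _ P hm hd
end Aux

section Aux2
variable {α : Type*} [MeasurableSpace α]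

lemma jordan_mass_le_tvNorm [Nonempty α] (c : ComplexMeasure α) (s : SignedMeasure α)
    (hcomp : ∀ E : Set α, MeasurableSet E → |s E| ≤ ‖c E‖) :
    (s.toJordanDecomposition.posPart Set.univ).toReal +
      (s.toJordanDecomposition.negPart Set.univ).toReal ≤ tvNorm c := by
  classical
  obtain ⟨i, hi₁, hi₂, hi₃, hp, hn⟩ := s.toJordanDecomposition_spec
  have hine : i ≠ iᶜ := by
    intro h
    obtain ⟨x⟩ := ‹Nonempty α›
    by_cases hx : x ∈ i
    · have hx' : x ∈ iᶜ := h ▸ hx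
      exact hx' hx
    · have hx' : x ∈ iᶜ := hx
      rw [← h] at hx'
      exact hx hx'
  have hpv : (s.toJordanDecomposition.posPart Set.univ).toReal = s i := by
    rw [hp, SignedMeasure.toMeasureOfZeroLE_apply _ hi₂ hi₁ MeasurableSet.univ]
    simp [Set.inter_univ]
  have hnv : (s.toJordanDecomposition.negPart Set.univ).toReal = -s iᶜ := by
    rw [hn, SignedMeasure.toMeasureOfLEZero_apply _ hi₃ hi₁.compl MeasurableSet.univ]
    simp [Set.inter_univ]
  have hmem : ‖c i‖ + ‖c iᶜ‖ ∈ {r : ℝ | ∃ P : Finset (Set α), (∀ E ∈ P, MeasurableSet E) ∧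
      (P : Set (Set α)).PairwiseDisjoint id ∧ r = ∑ E ∈ P, ‖c E‖} := by
    refine ⟨{i, iᶜ}, ?_, ?_, ?_⟩
    · intro E hE
      rcases Finset.mem_insert.1 hE with h | h
      · exact h ▸ hi₁
      · rw [Finset.mem_singleton] at h
        exact h ▸ hi₁.compl
    · intro E hE F hF hEF
      simp only [Finset.coe_insert, Finset.coe_singleton, Set.mem_insert_iff,
        Set.mem_singleton_iff] at hE hF
      rcases hE with rfl | rfl <;> rcases hF with rfl | rfl
      · exact absurd rfl hEF
      · exact disjoint_compl_right
      · exact disjoint_compl_left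
      · exact absurd rfl hEF
    · rw [Finset.sum_pair hine]
  have hle := le_csSup (tvNorm_set_bddAbove c) hmem
  have h1 := hcomp i hi₁
  have h2 := hcomp iᶜ hi₁.compl
  have := abs_nonneg (s i)
  rw [hpv, hnv]
  have hsi : s i ≤ |s i| := le_abs_self _
  have hsc : -s iᶜ ≤ |s iᶜ| := neg_le_abs _
  unfold tvNorm
  linarith

lemma cmass_le_two_tvNorm [Nonempty α] (c : ComplexMeasure α) :
    cmass c ≤ 2 * tvNorm c := by
  have hre := jordan_mass_le_tvNorm c (ComplexMeasure.re c) (fun E _ => by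
    rw [show (ComplexMeasure.re c) E = (c E).re from rfl]
    exact Complex.abs_re_le_norm _)
  have him := jordan_mass_le_tvNorm c (ComplexMeasure.im c) (fun E _ => by
    rw [show (ComplexMeasure.im c) E = (c E).im from rfl]
    exact Complex.abs_im_le_norm _)
  unfold cmass cRePos cReNeg cImPos cImNeg
  linarith

variable [TopologicalSpace α] [OpensMeasurableSpace α] [CompactSpace α]

lemma integrable_cm (ν : Measure α) [IsFiniteMeasure ν] (f : C(α, ℂ)) :
    Integrable (fun x => f x) ν :=
  ⟨(map_continuous f).aestronglyMeasurable,
    MeasureTheory.HasFiniteIntegral.of_bounded (C := ‖f‖)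
      (Filter.Eventually.of_forall fun x => f.norm_coe_le_norm x)⟩

lemma cInt_cm_sub (c : ComplexMeasure α) (f g : C(α, ℂ)) :
    cInt c (fun x => f x - g x) = cInt c f - cInt c g := by
  unfold cInt
  rw [integral_sub (integrable_cm _ f) (integrable_cm _ g),
    integral_sub (integrable_cm _ f) (integrable_cm _ g),
    integral_sub (integrable_cm _ f) (integrable_cm _ g),
    integral_sub (integrable_cm _ f) (integrable_cm _ g)]
  ring

lemma norm_cInt_le (c : ComplexMeasure α) (f : C(α, ℂ)) :
    ‖cInt c f‖ ≤ cmass c * ‖f‖ := by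
  have key : ∀ (ν : Measure α), IsFiniteMeasure ν →
      ‖∫ x, f x ∂ν‖ ≤ ‖f‖ * (ν Set.univ).toReal := fun ν _ =>
    norm_integral_le_of_norm_le_const
      (Filter.Eventually.of_forall fun x => f.norm_coe_le_norm x)
  have h1 := key (cRePos c) inferInstance
  have h2 := key (cReNeg c) inferInstance
  have h3 := key (cImPos c) inferInstance
  have h4 := key (cImNeg c) inferInstance
  have hf : (0:ℝ) ≤ ‖f‖ := norm_nonneg _
  unfold cInt
  calc ‖((∫ x, f x ∂(cRePos c)) - ∫ x, f x ∂(cReNeg c)) +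
      Complex.I * ((∫ x, f x ∂(cImPos c)) - ∫ x, f x ∂(cImNeg c))‖
      ≤ ‖(∫ x, f x ∂(cRePos c)) - ∫ x, f x ∂(cReNeg c)‖ +
        ‖Complex.I * ((∫ x, f x ∂(cImPos c)) - ∫ x, f x ∂(cImNeg c))‖ := norm_add_le _ _
    _ ≤ (‖∫ x, f x ∂(cRePos c)‖ + ‖∫ x, f x ∂(cReNeg c)‖) +
        (‖∫ x, f x ∂(cImPos c)‖ + ‖∫ x, f x ∂(cImNeg c)‖) := by
        rw [norm_mul, Complex.norm_I, one_mul]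
        exact add_le_add (norm_sub_le _ _) (norm_sub_le _ _)
    _ ≤ cmass c * ‖f‖ := by
        unfold cmass
        nlinarith [ENNReal.toReal_nonneg (a := cRePos c Set.univ),
          ENNReal.toReal_nonneg (a := cReNeg c Set.univ),
          ENNReal.toReal_nonneg (a := cImPos c Set.univ),
          ENNReal.toReal_nonneg (a := cImNeg c Set.univ)]

lemma norm_cInt_sub_le (c : ComplexMeasure α) (f g : C(α, ℂ)) :
    ‖cInt c f - cInt c g‖ ≤ cmass c * ‖f - g‖ := by
  have h := norm_cInt_le c (f - g)
  rw [show cInt c ⇑(f - g) = cInt c f - cInt c g from by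
    rw [← cInt_cm_sub]; congr 1] at h
  exact h

end Aux2

/-- Let `G` be a compact Hausdorff group, `(μₙ)` a sequence of complex Borel
measures on `G` which is bounded in total variation norm, and `μ` a complex Borel measure on
`G`.  Then `μₙ → μ` weak* (i.e. `∫ f dμₙ → ∫ f dμ` for every continuous `f : G → ℂ`) if and
only if `μₙ ∗ f → μ ∗ f` uniformly on `G` for every continuous `f : G → ℂ`. -/
theorem stmt8 {G : Type*} [Group G] [TopologicalSpace G] [IsTopologicalGroup G]
    [CompactSpace G] [T2Space G] [MeasurableSpace G] [BorelSpace G]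
    (μseq : ℕ → ComplexMeasure G) (hbd : ∃ C : ℝ, ∀ n : ℕ, tvNorm (μseq n) ≤ C)
    (μ : ComplexMeasure G) :
    (∀ f : C(G, ℂ),
        Filter.Tendsto (fun n : ℕ => cInt (μseq n) f) Filter.atTop (𝓝 (cInt μ f)))
      ↔ (∀ f : C(G, ℂ),
        TendstoUniformly (fun (n : ℕ) (x : G) => cmeasConv (μseq n) f x)
          (fun x => cmeasConv μ f x) Filter.atTop) := by
  constructor
  · intro h f
    have hψ : Continuous fun p : G × G => f (p.2⁻¹ * p.1) :=
      f.continuous.comp ((continuous_inv.comp continuous_snd).mul continuous_fst)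
    set Φ : C(G, C(G, ℂ)) :=
      ContinuousMap.curry ⟨fun p : G × G => f (p.2⁻¹ * p.1), hψ⟩ with hΦ
    have hconv : ∀ (ν : ComplexMeasure G) (x : G), cmeasConv ν f x = cInt ν (Φ x) := by
      intro ν x
      show cInt ν (fun g => f (g⁻¹ * x)) = cInt ν (Φ x)
      congr 1
    obtain ⟨C, hC⟩ := hbd
    set D : ℝ := max (2 * C) (cmass μ) with hD
    have hDn : ∀ n, cmass (μseq n) ≤ D := fun n =>
      le_trans (le_trans (cmass_le_two_tvNorm _) (by linarith [hC n])) (le_max_left _ _)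
    have hDμ : cmass μ ≤ D := le_max_right _ _
    have hD0 : 0 ≤ D := le_trans (cmass_nonneg μ) hDμ
    rw [Metric.tendstoUniformly_iff]
    intro ε hε
    set δ : ℝ := ε / (2 * D + 2) with hδ
    have hδ0 : 0 < δ := div_pos hε (by linarith)
    have hδε : δ * (2 * D + 2) = ε := div_mul_cancel₀ ε (by linarith)
    obtain ⟨t, ht⟩ := isCompact_univ.elim_finite_subcover
      (fun y : G => {x | ‖Φ x - Φ y‖ < δ})
      (fun y => isOpen_lt (((map_continuous Φ).sub continuous_const).norm) continuous_const)
      (by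
        intro x _
        refine Set.mem_iUnion.2 ⟨x, ?_⟩
        simp [hδ0])
    have hev : ∀ᶠ n in atTop, ∀ y ∈ (t : Set G),
        dist (cInt (μseq n) (Φ y)) (cInt μ (Φ y)) < δ := by
      rw [eventually_all_finite t.finite_toSet]
      intro y _
      have hy := h (Φ y)
      rw [Metric.tendsto_nhds] at hy
      exact hy δ hδ0
    filter_upwards [hev] with n hn x
    obtain ⟨y, hyt, hxy⟩ := Set.mem_iUnion₂.1 (ht (Set.mem_univ x))
    have hxy' : ‖Φ x - Φ y‖ < δ := hxy
    have a1 : ‖cInt μ (Φ x) - cInt μ (Φ y)‖ ≤ cmass μ * ‖Φ x - Φ y‖ :=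
      norm_cInt_sub_le μ (Φ x) (Φ y)
    have a2 : dist (cInt (μseq n) (Φ y)) (cInt μ (Φ y)) < δ := hn y (Finset.mem_coe.2 hyt)
    have a3 : ‖cInt (μseq n) (Φ y) - cInt (μseq n) (Φ x)‖ ≤
        cmass (μseq n) * ‖Φ y - Φ x‖ := norm_cInt_sub_le (μseq n) (Φ y) (Φ x)
    have b1 : cmass μ * ‖Φ x - Φ y‖ ≤ D * δ :=
      mul_le_mul hDμ (le_of_lt hxy') (norm_nonneg _) hD0
    have b3 : cmass (μseq n) * ‖Φ y - Φ x‖ ≤ D * δ := by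
      rw [norm_sub_rev]
      exact mul_le_mul (hDn n) (le_of_lt hxy') (norm_nonneg _) hD0
    have tri : dist (cmeasConv μ f x) (cmeasConv (μseq n) f x) ≤
        dist (cInt μ (Φ x)) (cInt μ (Φ y)) + dist (cInt μ (Φ y)) (cInt (μseq n) (Φ y)) +
          dist (cInt (μseq n) (Φ y)) (cInt (μseq n) (Φ x)) := by
      rw [hconv μ x, hconv (μseq n) x]
      exact dist_triangle4 _ _ _ _
    rw [dist_eq_norm] at tri
    rw [dist_eq_norm] at tri
    rw [dist_comm, dist_eq_norm] at a2
    rw [dist_eq_norm] at tri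
    calc dist (cmeasConv μ f x) (cmeasConv (μseq n) f x) ≤ _ := by simpa only [dist_eq_norm] using tri
      _ ≤ D * δ + δ + D * δ := add_le_add (add_le_add (a1.trans b1) a2.le) (a3.trans b3)
      _ < ε := by nlinarith
  · intro h f
    have hf' : Continuous fun g : G => f g⁻¹ := f.continuous.comp continuous_inv
    have key := (h ⟨fun g => f g⁻¹, hf'⟩).tendsto_at 1
    have heq : ∀ ν : ComplexMeasure G,
        cmeasConv ν (⇑(⟨fun g => f g⁻¹, hf'⟩ : C(G, ℂ))) 1 = cInt ν ⇑f := by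
      intro ν
      show cInt ν (fun g => f ((g⁻¹ * 1))⁻¹) = cInt ν ⇑f
      congr 1
      funext g
      simp
    simp only [heq] at key
    exact key
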